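/- Let Γ be a finite simple graph with N edges and maximum vertex degree 𝓜^H ≥ 1, and let {W_e} be real-valued random variables indexed by the edges e of Γ such that |W_e| ≤ A almost surely for every edge e, and such that for any two disjoint sets S₁, S₂ of edges with no edge of S₁ sharing a vertex with any edge of S₂, the families {W_e}_{e ∈ S₁} and {W_f}_{f ∈ S₂} are independent. Let R = ∑_{i} ∑_{j} 1_{i,j} · W_i · W_j, where the sums run over all edges and 1_{i,j} = 1 if edges i and j share a vertex and 0 otherwise. Then Var(R) ≤ 8·A⁴·N·(2𝓜^H − 1)³. -/

import Mathlib

open MeasureTheory ProbabilityTheory Filter Matrix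
open scoped Classical NNReal Topology

noncomputable section

variable {V : Type*} [Fintype V] [DecidableEq V]

/-- The finset of edges of a simple graph. -/
def edgeF (Γ : SimpleGraph V) : Finset (Sym2 V) := Γ.edgeSet.toFinite.toFinset

/-- Two edges share a vertex (an edge shares a vertex with itself). -/
def shares (e f : Sym2 V) : Prop := ∃ v, v ∈ e ∧ v ∈ f

/-- The degree of a vertex: the number of edges containing it. -/
def vdeg (Γ : SimpleGraph V) (v : V) : ℕ := ((edgeF Γ).filter fun e => v ∈ e).card

/-- The maximum vertex degree of the graph. -/
def maxVdeg (Γ : SimpleGraph V) : ℕ := Finset.univ.sup (vdeg Γ)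

set_option linter.unusedSectionVars false in
lemma shares_comm' {e f : Sym2 V} : shares e f ↔ shares f e := by
  unfold shares; tauto

lemma var_sum_eq' {Ω : Type} [MeasureSpace Ω] [IsProbabilityMeasure (volume : Measure Ω)]
    {ι : Type*} (s : Finset ι) (Z : ι → Ω → ℝ) (C : ℝ)
    (hm : ∀ i ∈ s, Measurable (Z i)) (hb : ∀ i ∈ s, ∀ᵐ ω, |Z i ω| ≤ C) :
    variance (fun ω => ∑ i ∈ s, Z i ω) volume
      = ∑ i ∈ s, ∑ j ∈ s,
        ((∫ ω, Z i ω * Z j ω) - (∫ ω, Z i ω) * (∫ ω, Z j ω)) := by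
  have hb' : ∀ i ∈ s, ∀ᵐ ω, ‖Z i ω‖ ≤ |C| := by
    intro i hi
    filter_upwards [hb i hi] with ω hω
    simpa [Real.norm_eq_abs] using hω.trans (le_abs_self C)
  have hint : ∀ i ∈ s, Integrable (Z i) volume := by
    intro i hi
    exact (integrable_const |C|).mono' (hm i hi).aestronglyMeasurable (hb' i hi)
  have hint2 : ∀ i ∈ s, ∀ j ∈ s, Integrable (fun ω => Z i ω * Z j ω) volume := by
    intro i hi j hj
    refine (integrable_const (|C| * |C|)).mono'
      (((hm i hi).mul (hm j hj)).aestronglyMeasurable) ?_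
    filter_upwards [hb' i hi, hb' j hj] with ω h1 h2
    simp only [Real.norm_eq_abs, abs_mul] at *
    exact mul_le_mul h1 h2 (abs_nonneg _) (abs_nonneg _)
  have hball : ∀ᵐ ω, ∀ i ∈ s, |Z i ω| ≤ |C| := by
    rw [Filter.eventually_all_finset]
    intro i hi
    filter_upwards [hb i hi] with ω hω using hω.trans (le_abs_self C)
  have hMem : MemLp (fun ω => ∑ i ∈ s, Z i ω) 2 volume := by
    refine MemLp.of_bound ((Finset.measurable_sum s hm).aestronglyMeasurable)
      (s.card * |C|) ?_
    filter_upwards [hball] with ω hω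
    calc ‖∑ i ∈ s, Z i ω‖ ≤ ∑ i ∈ s, ‖Z i ω‖ := norm_sum_le _ _
      _ ≤ ∑ _i ∈ s, |C| := Finset.sum_le_sum fun i hi => by
            simpa [Real.norm_eq_abs] using hω i hi
      _ = s.card * |C| := by simp [Finset.sum_const, nsmul_eq_mul]
  rw [variance_eq_sub hMem]
  have h1 : (∫ ω, (∑ i ∈ s, Z i ω) ^ 2)
      = ∑ i ∈ s, ∑ j ∈ s, ∫ ω, Z i ω * Z j ω := by
    have : (fun ω => (∑ i ∈ s, Z i ω) ^ 2)
        = fun ω => ∑ i ∈ s, ∑ j ∈ s, Z i ω * Z j ω := by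
      funext ω; rw [sq, Finset.sum_mul_sum]
    rw [this, integral_finset_sum s (fun i hi =>
      integrable_finset_sum s (fun j hj => hint2 i hi j hj))]
    exact Finset.sum_congr rfl fun i hi =>
      integral_finset_sum s (fun j hj => hint2 i hi j hj)
  have h2 : (∫ ω, ∑ i ∈ s, Z i ω) = ∑ i ∈ s, ∫ ω, Z i ω :=
    integral_finset_sum s hint
  calc (∫ ω, (∑ i ∈ s, Z i ω) ^ 2) - (∫ ω, ∑ i ∈ s, Z i ω) ^ 2
      = (∑ i ∈ s, ∑ j ∈ s, ∫ ω, Z i ω * Z j ω)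
        - ∑ i ∈ s, ∑ j ∈ s, (∫ ω, Z i ω) * (∫ ω, Z j ω) := by
        rw [h1, h2, sq, Finset.sum_mul_sum]
    _ = ∑ i ∈ s, ∑ j ∈ s,
        ((∫ ω, Z i ω * Z j ω) - (∫ ω, Z i ω) * (∫ ω, Z j ω)) := by
        rw [← Finset.sum_sub_distrib]
        exact Finset.sum_congr rfl fun i _ => by rw [← Finset.sum_sub_distrib]

lemma sum_chi_le (Γ : SimpleGraph V) {e : Sym2 V} (he : e ∈ edgeF Γ) :
    ∑ f ∈ edgeF Γ, (if shares e f then (1:ℝ) else 0)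
      ≤ 2 * (maxVdeg Γ : ℝ) - 1 := by
  have hcard : ((edgeF Γ).filter fun f => shares e f).card + 1 ≤ 2 * maxVdeg Γ := by
    have heS : e ∈ Γ.edgeSet := by simpa [edgeF] using he
    obtain ⟨u, v⟩ := e
    show ((edgeF Γ).filter fun f => shares s(u, v) f).card + 1 ≤ 2 * maxVdeg Γ
    set A := (edgeF Γ).filter fun f => u ∈ f with hA
    set B := (edgeF Γ).filter fun f => v ∈ f with hB
    have hsub : (edgeF Γ).filter (fun f => shares s(u, v) f) ⊆ A ∪ B := by
      intro f hf
      rw [Finset.mem_filter] at hf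
      obtain ⟨hfT, w, hw1, hw2⟩ := hf
      rw [Sym2.mem_iff] at hw1
      rcases hw1 with rfl | rfl
      · exact Finset.mem_union_left _ (Finset.mem_filter.2 ⟨hfT, hw2⟩)
      · exact Finset.mem_union_right _ (Finset.mem_filter.2 ⟨hfT, hw2⟩)
    have h1 : ((edgeF Γ).filter fun f => shares s(u, v) f).card ≤ (A ∪ B).card :=
      Finset.card_le_card hsub
    have h2 : (A ∪ B).card + (A ∩ B).card = A.card + B.card :=
      Finset.card_union_add_card_inter A B
    have h3 : 0 < (A ∩ B).card := by
      refine Finset.card_pos.2 ⟨s(u, v), Finset.mem_inter.2 ⟨?_, ?_⟩⟩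
      · exact Finset.mem_filter.2 ⟨he, Sym2.mem_mk_left u v⟩
      · exact Finset.mem_filter.2 ⟨he, Sym2.mem_mk_right u v⟩
    have h4 : A.card ≤ maxVdeg Γ := Finset.le_sup (f := vdeg Γ) (Finset.mem_univ u)
    have h5 : B.card ≤ maxVdeg Γ := Finset.le_sup (f := vdeg Γ) (Finset.mem_univ v)
    omega
  have hsum : ∑ f ∈ edgeF Γ, (if shares e f then (1:ℝ) else 0)
      = (((edgeF Γ).filter fun f => shares e f).card : ℝ) := by
    simp [Finset.sum_boole]
  rw [hsum]
  have := (Nat.cast_le (α := ℝ)).2 hcard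
  push_cast at this
  linarith

/-- If the `W_e`, indexed by the edges of `Γ`, are a.s. bounded by `A` and satisfy the
dyadic dependence condition (vertex-disjoint families of edges carry independent
variables), then `R = ∑_i ∑_j 1_{i,j} W_i W_j` satisfies
`Var(R) ≤ 8 A⁴ N (2𝓜^H − 1)³`. -/
theorem variance_bound_meat
    {Ωs : Type} [MeasureSpace Ωs] [IsProbabilityMeasure (volume : Measure Ωs)]
    (Γ : SimpleGraph V)
    (W : Sym2 V → Ωs → ℝ)
    (hmeas : ∀ e ∈ edgeF Γ, Measurable (W e))
    (A : ℝ)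
    (hbdd : ∀ e ∈ edgeF Γ, ∀ᵐ ω, |W e ω| ≤ A)
    (hMH1 : 1 ≤ maxVdeg Γ)
    (hdep : ∀ S₁ S₂ : Finset (Sym2 V), ↑S₁ ⊆ Γ.edgeSet → ↑S₂ ⊆ Γ.edgeSet →
      (∀ e ∈ S₁, ∀ f ∈ S₂, ¬ shares e f) →
      IndepFun (fun ω (e : S₁) => W e.1 ω) (fun ω (f : S₂) => W f.1 ω)) :
    variance (fun ω => ∑ e ∈ edgeF Γ, ∑ f ∈ edgeF Γ,
        (if shares e f then (1:ℝ) else 0) * W e ω * W f ω) volume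
      ≤ 8 * A ^ 4 * ((edgeF Γ).card : ℝ) * (2 * (maxVdeg Γ : ℝ) - 1) ^ 3 := by
  set T := edgeF Γ with hTdef
  set D : ℝ := 2 * (maxVdeg Γ : ℝ) - 1 with hDdef
  have hD1 : (1:ℝ) ≤ D := by
    have : (1:ℝ) ≤ (maxVdeg Γ : ℝ) := by exact_mod_cast hMH1
    rw [hDdef]; linarith
  have hD0 : (0:ℝ) ≤ D := le_trans zero_le_one hD1
  have hedge : ∀ e ∈ T, e ∈ Γ.edgeSet := fun e he => by simpa [hTdef, edgeF] using he
  have hA0 : ∀ e ∈ T, (0:ℝ) ≤ A := by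
    intro e he
    obtain ⟨ω, hω⟩ := (hbdd e he).exists
    exact (abs_nonneg _).trans hω
  have chi_nonneg : ∀ P : Prop, (0:ℝ) ≤ (if P then (1:ℝ) else 0) := by
    intro P; split_ifs <;> norm_num
  -- the summand family
  set Z : Sym2 V × Sym2 V → Ωs → ℝ :=
    fun p ω => (if shares p.1 p.2 then (1:ℝ) else 0) * W p.1 ω * W p.2 ω with hZdef
  have hZm : ∀ p ∈ T ×ˢ T, Measurable (Z p) := by
    intro p hp
    rw [Finset.mem_product] at hp
    exact (measurable_const.mul (hmeas p.1 hp.1)).mul (hmeas p.2 hp.2)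
  have hZb : ∀ p ∈ T ×ˢ T, ∀ᵐ ω, |Z p ω| ≤ A ^ 2 := by
    intro p hp
    rw [Finset.mem_product] at hp
    have hA : 0 ≤ A := hA0 p.1 hp.1
    filter_upwards [hbdd p.1 hp.1, hbdd p.2 hp.2] with ω h1 h2
    rw [hZdef]
    simp only [abs_mul]
    have hc : |if shares p.1 p.2 then (1:ℝ) else 0| ≤ 1 := by split_ifs <;> norm_num
    calc |if shares p.1 p.2 then (1:ℝ) else 0| * |W p.1 ω| * |W p.2 ω|
        ≤ 1 * A * A := by
          exact mul_le_mul (mul_le_mul hc h1 (abs_nonneg _) zero_le_one) h2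
            (abs_nonneg _) (by linarith)
      _ = A ^ 2 := by ring
  have hZint : ∀ p ∈ T ×ˢ T, Integrable (Z p) volume := by
    intro p hp
    refine (integrable_const (A ^ 2)).mono' (hZm p hp).aestronglyMeasurable ?_
    filter_upwards [hZb p hp] with ω hω using by simpa [Real.norm_eq_abs] using hω
  have hZZint : ∀ p ∈ T ×ˢ T, ∀ q ∈ T ×ˢ T,
      Integrable (fun ω => Z p ω * Z q ω) volume := by
    intro p hp q hq
    refine (integrable_const (A ^ 2 * A ^ 2)).mono'
      ((hZm p hp).mul (hZm q hq)).aestronglyMeasurable ?_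
    filter_upwards [hZb p hp, hZb q hq] with ω h1 h2
    simp only [Real.norm_eq_abs, abs_mul]
    exact mul_le_mul h1 h2 (abs_nonneg _) (by positivity)
  have hZI : ∀ p ∈ T ×ˢ T, |∫ ω, Z p ω| ≤ A ^ 2 := by
    intro p hp
    have h := norm_integral_le_of_norm_le_const (μ := volume) (f := Z p) (C := A ^ 2)
      (by filter_upwards [hZb p hp] with ω hω using by simpa [Real.norm_eq_abs] using hω)
    simpa [Real.norm_eq_abs, measure_univ] using h
  have hZZI : ∀ p ∈ T ×ˢ T, ∀ q ∈ T ×ˢ T, |∫ ω, Z p ω * Z q ω| ≤ A ^ 4 := by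
    intro p hp q hq
    have h := norm_integral_le_of_norm_le_const (μ := volume)
      (f := fun ω => Z p ω * Z q ω) (C := A ^ 4) ?_
    · simpa [Real.norm_eq_abs, measure_univ] using h
    · filter_upwards [hZb p hp, hZb q hq] with ω h1 h2
      simp only [Real.norm_eq_abs, abs_mul]
      calc |Z p ω| * |Z q ω| ≤ A ^ 2 * A ^ 2 :=
            mul_le_mul h1 h2 (abs_nonneg _) (by positivity)
        _ = A ^ 4 := by ring
  -- integrability of products of two W's
  have hWWint : ∀ e ∈ T, ∀ f ∈ T, Integrable (fun ω => W e ω * W f ω) volume := by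
    intro e he f hf
    refine (integrable_const (|A| * |A|)).mono'
      ((hmeas e he).mul (hmeas f hf)).aestronglyMeasurable ?_
    filter_upwards [hbdd e he, hbdd f hf] with ω h1 h2
    simp only [Real.norm_eq_abs, abs_mul]
    exact mul_le_mul (h1.trans (le_abs_self A)) (h2.trans (le_abs_self A))
      (abs_nonneg _) (abs_nonneg _)
  -- independence consequence
  have hindep : ∀ e ∈ T, ∀ f ∈ T, ∀ g ∈ T, ∀ h ∈ T,
      ¬ shares e g → ¬ shares e h → ¬ shares f g → ¬ shares f h →
      (∫ ω, W e ω * W f ω * (W g ω * W h ω))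
        = (∫ ω, W e ω * W f ω) * ∫ ω, W g ω * W h ω := by
    intro e he f hf g hg h hh hneg heh hfg hfh
    have hsub1 : ↑({e, f} : Finset (Sym2 V)) ⊆ Γ.edgeSet := by
      intro x hx
      simp only [Finset.coe_insert, Finset.coe_singleton, Set.mem_insert_iff,
        Set.mem_singleton_iff] at hx
      rcases hx with rfl | rfl
      · exact hedge _ he
      · exact hedge _ hf
    have hsub2 : ↑({g, h} : Finset (Sym2 V)) ⊆ Γ.edgeSet := by
      intro x hx
      simp only [Finset.coe_insert, Finset.coe_singleton, Set.mem_insert_iff,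
        Set.mem_singleton_iff] at hx
      rcases hx with rfl | rfl
      · exact hedge _ hg
      · exact hedge _ hh
    have hno : ∀ a ∈ ({e, f} : Finset (Sym2 V)), ∀ b ∈ ({g, h} : Finset (Sym2 V)),
        ¬ shares a b := by
      intro a ha b hb
      simp only [Finset.mem_insert, Finset.mem_singleton] at ha hb
      rcases ha with rfl | rfl <;> rcases hb with rfl | rfl <;> assumption
    have hI := hdep {e, f} {g, h} hsub1 hsub2 hno
    have he1 : e ∈ ({e, f} : Finset (Sym2 V)) := by simp
    have hf1 : f ∈ ({e, f} : Finset (Sym2 V)) := by simp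
    have hg1 : g ∈ ({g, h} : Finset (Sym2 V)) := by simp
    have hh1 : h ∈ ({g, h} : Finset (Sym2 V)) := by simp
    have hφ : Measurable (fun x : ({e, f} : Finset (Sym2 V)) → ℝ =>
        x ⟨e, he1⟩ * x ⟨f, hf1⟩) :=
      (measurable_pi_apply _).mul (measurable_pi_apply _)
    have hψ : Measurable (fun x : ({g, h} : Finset (Sym2 V)) → ℝ =>
        x ⟨g, hg1⟩ * x ⟨h, hh1⟩) :=
      (measurable_pi_apply _).mul (measurable_pi_apply _)
    have hI2 : IndepFun (fun ω => W e ω * W f ω) (fun ω => W g ω * W h ω) volume :=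
      hI.comp hφ hψ
    have := hI2.integral_mul_eq_mul_integral (hWWint e he f hf).aestronglyMeasurable
      (hWWint g hg h hh).aestronglyMeasurable
    simpa [Pi.mul_apply] using this
  -- per-term covariance bound
  have key : ∀ e ∈ T, ∀ f ∈ T, ∀ g ∈ T, ∀ h ∈ T,
      (∫ ω, Z (e, f) ω * Z (g, h) ω) - (∫ ω, Z (e, f) ω) * (∫ ω, Z (g, h) ω)
        ≤ 2 * A ^ 4 * ((if shares e f then (1:ℝ) else 0) *
            (if shares g h then (1:ℝ) else 0) *
            ((if shares e g then (1:ℝ) else 0) + (if shares e h then (1:ℝ) else 0) +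
             (if shares f g then (1:ℝ) else 0) + (if shares f h then (1:ℝ) else 0))) := by
    intro e he f hf g hg h hh
    have hmp : (e, f) ∈ T ×ˢ T := Finset.mem_product.2 ⟨he, hf⟩
    have hmq : (g, h) ∈ T ×ˢ T := Finset.mem_product.2 ⟨hg, hh⟩
    have hXnn : (0:ℝ) ≤ (if shares e g then (1:ℝ) else 0) + (if shares e h then (1:ℝ) else 0)
        + (if shares f g then (1:ℝ) else 0) + (if shares f h then (1:ℝ) else 0) := by
      have := chi_nonneg (shares e g); have := chi_nonneg (shares e h)
      have := chi_nonneg (shares f g); have := chi_nonneg (shares f h)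
      linarith
    by_cases h1 : shares e f
    · by_cases h2 : shares g h
      · by_cases h3 : shares e g ∨ shares e h ∨ shares f g ∨ shares f h
        · -- crude bound
          have ha := hZZI (e, f) hmp (g, h) hmq
          have hb := hZI (e, f) hmp
          have hc := hZI (g, h) hmq
          rw [abs_le] at ha hb hc
          have hX1 : (1:ℝ) ≤ (if shares e g then (1:ℝ) else 0)
              + (if shares e h then (1:ℝ) else 0)
              + (if shares f g then (1:ℝ) else 0)
              + (if shares f h then (1:ℝ) else 0) := by
            have := chi_nonneg (shares e g); have := chi_nonneg (shares e h)
            have := chi_nonneg (shares f g); have := chi_nonneg (shares f h)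
            rcases h3 with h3 | h3 | h3 | h3 <;> simp only [if_pos h3] <;> linarith
          rw [if_pos h1, if_pos h2]
          have hA4 : (0:ℝ) ≤ A ^ 4 := by positivity
          nlinarith [ha.1, ha.2, hb.1, hb.2, hc.1, hc.2]
        · -- independence: covariance vanishes
          push_neg at h3
          obtain ⟨hg1, hg2, hg3, hg4⟩ := h3
          have hmul := hindep e he f hf g hg h hh hg1 hg2 hg3 hg4
          have hZe : Z (e, f) = fun ω => W e ω * W f ω := by
            funext ω; rw [hZdef]; simp [h1]
          have hZg : Z (g, h) = fun ω => W g ω * W h ω := by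
            funext ω; rw [hZdef]; simp [h2]
          rw [hZe, hZg]
          have : (∫ ω, W e ω * W f ω * (W g ω * W h ω))
              - (∫ ω, W e ω * W f ω) * (∫ ω, W g ω * W h ω) = 0 := by
            rw [hmul]; ring
          rw [this]
          have : (0:ℝ) ≤ 2 * A ^ 4 := by positivity
          exact mul_nonneg this (mul_nonneg
            (mul_nonneg (chi_nonneg _) (chi_nonneg _)) hXnn)
      · -- Z (g,h) = 0
        have hZg : Z (g, h) = fun _ => (0:ℝ) := by
          funext ω; rw [hZdef]; simp [h2]
        rw [hZg]
        simp only [mul_zero, integral_zero, if_neg h2]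
        norm_num
    · -- Z (e,f) = 0
      have hZe : Z (e, f) = fun _ => (0:ℝ) := by
        funext ω; rw [hZdef]; simp [h1]
      rw [hZe]
      simp only [zero_mul, integral_zero, if_neg h1]
      norm_num
  -- neighbour sums
  have hsum_chi : ∀ e ∈ T, ∑ f ∈ T, (if shares e f then (1:ℝ) else 0) ≤ D :=
    fun e he => sum_chi_le Γ he
  have hsum_chi' : ∀ e ∈ T, ∑ f ∈ T, (if shares f e then (1:ℝ) else 0) ≤ D := by
    intro e he
    have : ∀ f ∈ T, (if shares f e then (1:ℝ) else 0)
        = (if shares e f then (1:ℝ) else 0) :=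
      fun f _ => if_congr shares_comm' rfl rfl
    rw [Finset.sum_congr rfl this]
    exact hsum_chi e he
  -- two-variable counting bounds
  have bound2 : ∀ a ∈ T, ∑ g ∈ T, ∑ h ∈ T,
      (if shares g h then (1:ℝ) else 0) * (if shares a g then (1:ℝ) else 0)
        ≤ D ^ 2 := by
    intro a ha
    calc ∑ g ∈ T, ∑ h ∈ T,
          (if shares g h then (1:ℝ) else 0) * (if shares a g then (1:ℝ) else 0)
        = ∑ g ∈ T, (∑ h ∈ T, (if shares g h then (1:ℝ) else 0))
            * (if shares a g then (1:ℝ) else 0) :=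
          Finset.sum_congr rfl fun g _ => (Finset.sum_mul _ _ _).symm
      _ ≤ ∑ g ∈ T, D * (if shares a g then (1:ℝ) else 0) :=
          Finset.sum_le_sum fun g hg =>
            mul_le_mul_of_nonneg_right (hsum_chi g hg) (chi_nonneg _)
      _ = D * ∑ g ∈ T, (if shares a g then (1:ℝ) else 0) := by
          rw [Finset.mul_sum]
      _ ≤ D * D := mul_le_mul_of_nonneg_left (hsum_chi a ha) hD0
      _ = D ^ 2 := (sq D).symm
  have bound2' : ∀ a ∈ T, ∑ g ∈ T, ∑ h ∈ T,
      (if shares g h then (1:ℝ) else 0) * (if shares a h then (1:ℝ) else 0)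
        ≤ D ^ 2 := by
    intro a ha
    rw [Finset.sum_comm]
    calc ∑ h ∈ T, ∑ g ∈ T,
          (if shares g h then (1:ℝ) else 0) * (if shares a h then (1:ℝ) else 0)
        = ∑ h ∈ T, (∑ g ∈ T, (if shares g h then (1:ℝ) else 0))
            * (if shares a h then (1:ℝ) else 0) :=
          Finset.sum_congr rfl fun h _ => (Finset.sum_mul _ _ _).symm
      _ ≤ ∑ h ∈ T, D * (if shares a h then (1:ℝ) else 0) :=
          Finset.sum_le_sum fun h hh =>
            mul_le_mul_of_nonneg_right (hsum_chi' h hh) (chi_nonneg _)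
      _ = D * ∑ h ∈ T, (if shares a h then (1:ℝ) else 0) := by
          rw [Finset.mul_sum]
      _ ≤ D * D := mul_le_mul_of_nonneg_left (hsum_chi a ha) hD0
      _ = D ^ 2 := (sq D).symm
  have hinner : ∀ e ∈ T, ∀ f ∈ T, ∑ g ∈ T, ∑ h ∈ T,
      (if shares g h then (1:ℝ) else 0) *
        ((if shares e g then (1:ℝ) else 0) + (if shares e h then (1:ℝ) else 0) +
         (if shares f g then (1:ℝ) else 0) + (if shares f h then (1:ℝ) else 0))
        ≤ 4 * D ^ 2 := by
    intro e he f hf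
    calc ∑ g ∈ T, ∑ h ∈ T,
          (if shares g h then (1:ℝ) else 0) *
            ((if shares e g then (1:ℝ) else 0) + (if shares e h then (1:ℝ) else 0) +
             (if shares f g then (1:ℝ) else 0) + (if shares f h then (1:ℝ) else 0))
        = (∑ g ∈ T, ∑ h ∈ T,
            (if shares g h then (1:ℝ) else 0) * (if shares e g then (1:ℝ) else 0))
          + (∑ g ∈ T, ∑ h ∈ T,
            (if shares g h then (1:ℝ) else 0) * (if shares e h then (1:ℝ) else 0))
          + (∑ g ∈ T, ∑ h ∈ T,
            (if shares g h then (1:ℝ) else 0) * (if shares f g then (1:ℝ) else 0))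
          + (∑ g ∈ T, ∑ h ∈ T,
            (if shares g h then (1:ℝ) else 0) * (if shares f h then (1:ℝ) else 0)) := by
          simp only [mul_add, Finset.sum_add_distrib]
      _ ≤ D ^ 2 + D ^ 2 + D ^ 2 + D ^ 2 :=
          add_le_add (add_le_add (add_le_add (bound2 e he) (bound2' e he))
            (bound2 f hf)) (bound2' f hf)
      _ = 4 * D ^ 2 := by ring
  have hcount : ∑ e ∈ T, ∑ f ∈ T, ∑ g ∈ T, ∑ h ∈ T,
      (if shares e f then (1:ℝ) else 0) * ((if shares g h then (1:ℝ) else 0) *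
        ((if shares e g then (1:ℝ) else 0) + (if shares e h then (1:ℝ) else 0) +
         (if shares f g then (1:ℝ) else 0) + (if shares f h then (1:ℝ) else 0)))
        ≤ (T.card : ℝ) * (D * (4 * D ^ 2)) := by
    calc ∑ e ∈ T, ∑ f ∈ T, ∑ g ∈ T, ∑ h ∈ T,
          (if shares e f then (1:ℝ) else 0) * ((if shares g h then (1:ℝ) else 0) *
            ((if shares e g then (1:ℝ) else 0) + (if shares e h then (1:ℝ) else 0) +
             (if shares f g then (1:ℝ) else 0) + (if shares f h then (1:ℝ) else 0)))
        = ∑ e ∈ T, ∑ f ∈ T, (if shares e f then (1:ℝ) else 0) *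
            ∑ g ∈ T, ∑ h ∈ T, ((if shares g h then (1:ℝ) else 0) *
              ((if shares e g then (1:ℝ) else 0) + (if shares e h then (1:ℝ) else 0) +
               (if shares f g then (1:ℝ) else 0) + (if shares f h then (1:ℝ) else 0))) := by
          simp only [← Finset.mul_sum]
      _ ≤ ∑ e ∈ T, ∑ f ∈ T, (if shares e f then (1:ℝ) else 0) * (4 * D ^ 2) :=
          Finset.sum_le_sum fun e he => Finset.sum_le_sum fun f hf =>
            mul_le_mul_of_nonneg_left (hinner e he f hf) (chi_nonneg _)
      _ = ∑ e ∈ T, (∑ f ∈ T, (if shares e f then (1:ℝ) else 0)) * (4 * D ^ 2) :=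
          Finset.sum_congr rfl fun e _ => (Finset.sum_mul _ _ _).symm
      _ ≤ ∑ e ∈ T, D * (4 * D ^ 2) :=
          Finset.sum_le_sum fun e he =>
            mul_le_mul_of_nonneg_right (hsum_chi e he) (by positivity)
      _ = (T.card : ℝ) * (D * (4 * D ^ 2)) := by
          rw [Finset.sum_const, nsmul_eq_mul]
  -- put it all together
  have hfun : (fun ω => ∑ e ∈ T, ∑ f ∈ T,
      (if shares e f then (1:ℝ) else 0) * W e ω * W f ω)
      = fun ω => ∑ p ∈ T ×ˢ T, Z p ω := by
    funext ω
    rw [Finset.sum_product]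
  rw [hfun, var_sum_eq' (T ×ˢ T) Z (A ^ 2) hZm hZb]
  simp only [Finset.sum_product]
  calc ∑ e ∈ T, ∑ f ∈ T, ∑ g ∈ T, ∑ h ∈ T,
        ((∫ ω, Z (e, f) ω * Z (g, h) ω) - (∫ ω, Z (e, f) ω) * ∫ ω, Z (g, h) ω)
      ≤ ∑ e ∈ T, ∑ f ∈ T, ∑ g ∈ T, ∑ h ∈ T,
        2 * A ^ 4 * ((if shares e f then (1:ℝ) else 0) *
          (if shares g h then (1:ℝ) else 0) *
          ((if shares e g then (1:ℝ) else 0) + (if shares e h then (1:ℝ) else 0) +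
           (if shares f g then (1:ℝ) else 0) + (if shares f h then (1:ℝ) else 0))) :=
        Finset.sum_le_sum fun e he => Finset.sum_le_sum fun f hf =>
          Finset.sum_le_sum fun g hg => Finset.sum_le_sum fun h hh =>
            key e he f hf g hg h hh
    _ = 2 * A ^ 4 * ∑ e ∈ T, ∑ f ∈ T, ∑ g ∈ T, ∑ h ∈ T,
        ((if shares e f then (1:ℝ) else 0) * ((if shares g h then (1:ℝ) else 0) *
          ((if shares e g then (1:ℝ) else 0) + (if shares e h then (1:ℝ) else 0) +
           (if shares f g then (1:ℝ) else 0) + (if shares f h then (1:ℝ) else 0)))) := by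
        simp only [← Finset.mul_sum, mul_assoc]
    _ ≤ 2 * A ^ 4 * ((T.card : ℝ) * (D * (4 * D ^ 2))) :=
        mul_le_mul_of_nonneg_left hcount (by positivity)
    _ = 8 * A ^ 4 * (T.card : ℝ) * D ^ 3 := by ring
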